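/- arXiv:1912.03519 — 3 statements merged into one kernel-verified Lean document; each statement's English description precedes it below -/
import Mathlib

section
/- For all integers n ≥ 1 and m ≥ 2, the number of fuzzy topologies on an n-element set X with membership values in an m-element chain M having exactly 3 open sets is τ_F(n, m, 3) = m^n − 2. -/
/-- A fuzzy topology on `Fin n` with membership values in the `m`-element chain `Fin m`:
a collection of fuzzy sets (functions `Fin n → Fin m`) containing the constant function
with the least value, the constant function with the greatest value, and closed under
pointwise (binary) supremum and infimum. -/
def IsFuzzyTopology {n m : ℕ} (hm : m ≠ 0) (τ : Finset (Fin n → Fin m)) : Prop :=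
  (fun _ => (⟨0, Nat.pos_of_ne_zero hm⟩ : Fin m)) ∈ τ ∧
  (fun _ => (⟨m - 1, by omega⟩ : Fin m)) ∈ τ ∧
  (∀ f ∈ τ, ∀ g ∈ τ, f ⊔ g ∈ τ) ∧
  (∀ f ∈ τ, ∀ g ∈ τ, f ⊓ g ∈ τ)

/-- `tauF n m k hm` is the number of fuzzy topologies on an `n`-element set with values in an
`m`-element chain having exactly `k` open sets. -/
noncomputable def tauF (n m k : ℕ) (hm : m ≠ 0) : ℕ :=
  Nat.card {τ : Finset (Fin n → Fin m) // IsFuzzyTopology hm τ ∧ τ.card = k}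

/-- `biTauF n m k hm` is the number of fuzzy bitopological spaces (unordered pairs of fuzzy
topologies, allowing equal ones) on an `n`-element set with values in an `m`-element chain in
which both topologies have exactly `k` open sets. -/
noncomputable def biTauF (n m k : ℕ) (hm : m ≠ 0) : ℕ :=
  Nat.card (Sym2 {τ : Finset (Fin n → Fin m) // IsFuzzyTopology hm τ ∧ τ.card = k})

section Aux

variable {n m : ℕ}

lemma aux_bot_le (hm : m ≠ 0) (g : Fin n → Fin m) :
    (fun _ => (⟨0, Nat.pos_of_ne_zero hm⟩ : Fin m)) ≤ g := by
  intro x; exact Fin.mk_le_of_le_val (Nat.zero_le _)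

lemma aux_le_top (hm : m ≠ 0) (g : Fin n → Fin m) :
    g ≤ (fun _ => (⟨m - 1, by omega⟩ : Fin m)) := by
  intro x
  have := (g x).isLt
  exact Fin.le_def.mpr (by simp; omega)

lemma aux_topology (hm : m ≠ 0) (f : Fin n → Fin m) :
    IsFuzzyTopology hm
      ({(fun _ => (⟨0, Nat.pos_of_ne_zero hm⟩ : Fin m)),
        (fun _ => (⟨m - 1, by omega⟩ : Fin m)), f} : Finset (Fin n → Fin m)) := by
  set c0 : Fin n → Fin m := fun _ => ⟨0, Nat.pos_of_ne_zero hm⟩ with hc0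
  set c1 : Fin n → Fin m := fun _ => ⟨m - 1, by omega⟩ with hc1
  refine ⟨by simp [hc0, hc1], by simp [hc0, hc1], ?_, ?_⟩ <;>
  · intro g hg h hh
    simp only [Finset.mem_insert, Finset.mem_singleton] at hg hh ⊢
    rcases hg with rfl | rfl | rfl <;> rcases hh with rfl | rfl | rfl <;>
      simp [sup_eq_left, sup_eq_right, inf_eq_left, inf_eq_right,
        aux_bot_le hm, aux_le_top hm, le_refl, hc0, hc1]

end Aux

theorem tauF_three_open_sets (n m : ℕ) (hn : 1 ≤ n) (hm : 2 ≤ m) :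
    tauF n m 3 (by omega) = m ^ n - 2 := by
  have hm0 : m ≠ 0 := by omega
  set c0 : Fin n → Fin m := fun _ => ⟨0, Nat.pos_of_ne_zero hm0⟩ with hc0
  set c1 : Fin n → Fin m := fun _ => ⟨m - 1, by omega⟩ with hc1
  have hne : c0 ≠ c1 := by
    intro h
    have := congrFun h ⟨0, by omega⟩
    simp [hc0, hc1, Fin.ext_iff] at this
    omega
  -- bijection
  have key : tauF n m 3 hm0 = Nat.card {f : Fin n → Fin m // f ≠ c0 ∧ f ≠ c1} := by
    unfold tauF
    have hcard3 : ∀ f : {f : Fin n → Fin m // f ≠ c0 ∧ f ≠ c1},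
        ({c0, c1, f.1} : Finset (Fin n → Fin m)).card = 3 := by
      rintro ⟨f, hf1, hf2⟩
      rw [Finset.card_insert_of_notMem, Finset.card_insert_of_notMem] <;>
        simp [hne, Ne.symm hf1, Ne.symm hf2]
    refine (Nat.card_eq_of_bijective
      (fun f => ⟨({c0, c1, f.1} : Finset _), aux_topology hm0 f.1, hcard3 f⟩) ⟨?_, ?_⟩).symm
    · rintro ⟨f, hf1, hf2⟩ ⟨g, hg1, hg2⟩ h
      simp only [Subtype.mk.injEq] at h ⊢
      have : f ∈ ({c0, c1, g} : Finset (Fin n → Fin m)) := by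
        rw [← h]; simp
      simp only [Finset.mem_insert, Finset.mem_singleton] at this
      tauto
    · rintro ⟨τ, ⟨h0, h1, _, _⟩, hcard⟩
      have hsub : ({c0, c1} : Finset (Fin n → Fin m)) ⊆ τ := by
        intro x hx
        simp only [Finset.mem_insert, Finset.mem_singleton] at hx
        rcases hx with rfl | rfl <;> assumption
      have hdiff : (τ \ {c0, c1}).card = 1 := by
        rw [Finset.card_sdiff_of_subset hsub, hcard, Finset.card_insert_of_notMem (by simp [hne])]
        simp
      obtain ⟨f, hf⟩ := Finset.card_eq_one.mp hdiff
      have hfτ : f ∈ τ \ ({c0, c1} : Finset _) := hf ▸ Finset.mem_singleton_self f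
      rw [Finset.mem_sdiff, Finset.mem_insert, Finset.mem_singleton] at hfτ
      push_neg at hfτ
      refine ⟨⟨f, hfτ.2.1, hfτ.2.2⟩, ?_⟩
      simp only [Subtype.mk.injEq]
      apply Finset.eq_of_subset_of_card_le
      · intro x hx
        simp only [Finset.mem_insert, Finset.mem_singleton] at hx
        rcases hx with rfl | rfl | rfl
        · exact h0
        · exact h1
        · exact hfτ.1
      · rw [hcard, Finset.card_insert_of_notMem, Finset.card_insert_of_notMem] <;>
          simp [hne, Ne.symm hfτ.2.1, Ne.symm hfτ.2.2]
  rw [key, Nat.card_eq_fintype_card, Fintype.card_subtype]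
  have : (Finset.univ.filter (fun f : Fin n → Fin m => f ≠ c0 ∧ f ≠ c1))
      = Finset.univ \ {c0, c1} := by
    ext f
    simp only [Finset.mem_filter, Finset.mem_univ, true_and, Finset.mem_sdiff,
      Finset.mem_insert, Finset.mem_singleton]
    tauto
  rw [this, Finset.card_sdiff_of_subset (by simp), Finset.card_insert_of_notMem (by simp [hne])]
  simp [Finset.card_univ]
end

section
/- For all integers n ≥ m ≥ 2 and every integer k with m^n − m^(n−2) < k < m^n, there is no fuzzy topology on an n-element set X with membership values in an m-element chain M having exactly k open sets; that is, τ_F(n, m, k) = 0. -/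
/-- If two coordinates are pinned to forbidden values, at least `m ^ (n-2)` functions
are missing from `τ`. -/
lemma card_le_of_forbidden {n m : ℕ} (hm : m ≠ 0) (τ : Finset (Fin n → Fin m))
    {x y : Fin n} (hxy : y ≠ x) (b c : Fin m)
    (P : ∀ h ∈ τ, ¬(h x = b ∧ h y = c)) :
    τ.card + m ^ (n - 2) ≤ m ^ n := by
  classical
  set D := {z : Fin n // z ≠ x ∧ z ≠ y}
  have hcardD : Fintype.card D = n - 2 := by
    rw [Fintype.card_subtype]
    have : (Finset.univ.filter fun z : Fin n => z ≠ x ∧ z ≠ y) = Finset.univ \ {x, y} := by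
      ext z; simp [and_comm]
    rw [this, Finset.card_sdiff_of_subset (Finset.subset_univ _), Finset.card_univ, Fintype.card_fin,
      Finset.card_insert_of_notMem (by simp [hxy.symm]),
      Finset.card_singleton]
  -- injection from D → Fin m into the complement of τ
  have key : Fintype.card (D → Fin m) ≤ Fintype.card {h : Fin n → Fin m // h ∉ τ} := by
    apply Fintype.card_le_of_injective
      (fun g => (⟨fun z => if hz : z = x then b else if hz' : z = y then c
                  else g ⟨z, hz, hz'⟩, by
        intro hmem
        exact P _ hmem ⟨by simp, by simp [hxy]⟩⟩ :
        {h : Fin n → Fin m // h ∉ τ}))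
    intro g₁ g₂ hg
    have hg' := congrArg Subtype.val hg
    funext z
    obtain ⟨z, hz1, hz2⟩ := z
    have := congrFun hg' z
    simpa [hz1, hz2] using this
  have h1 : Fintype.card (D → Fin m) = m ^ (n - 2) := by
    rw [Fintype.card_fun, hcardD, Fintype.card_fin]
  have h2 : Fintype.card {h : Fin n → Fin m // h ∉ τ}
      = m ^ n - τ.card := by
    rw [Fintype.card_subtype_compl]
    have : Fintype.card {h : Fin n → Fin m // h ∈ τ} = τ.card := Fintype.card_coe τ
    rw [this, Fintype.card_fun, Fintype.card_fin, Fintype.card_fin]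
  have h3 : τ.card ≤ m ^ n := by
    calc τ.card ≤ Fintype.card (Fin n → Fin m) := Finset.card_le_univ τ
    _ = m ^ n := by rw [Fintype.card_fun, Fintype.card_fin, Fintype.card_fin]
  omega

lemma main_bound {n m : ℕ} (hm : m ≠ 0) (hn : 2 ≤ n) (τ : Finset (Fin n → Fin m))
    (hτ : IsFuzzyTopology hm τ) (hlt : τ.card < m ^ n) :
    τ.card + m ^ (n - 2) ≤ m ^ n := by
  classical
  obtain ⟨hbot, htop, hsup, hinf⟩ := hτ
  have hn0 : 0 < n := by omega
  haveI : NeZero n := ⟨by omega⟩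
  -- some function is missing
  obtain ⟨h₀, hh₀⟩ : ∃ h₀ : Fin n → Fin m, h₀ ∉ τ := by
    by_contra hc
    push_neg at hc
    have : τ = Finset.univ := Finset.eq_univ_iff_forall.2 hc
    rw [this, Finset.card_univ, Fintype.card_fun, Fintype.card_fin, Fintype.card_fin] at hlt
    omega
  set δ : Fin n → Fin m → (Fin n → Fin m) :=
    fun x a y => if y = x then a else ⟨0, Nat.pos_of_ne_zero hm⟩ with hδ
  -- some basic "point" function is missing
  obtain ⟨x, a, hxa⟩ : ∃ x a, δ x a ∉ τ := by
    by_contra hc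
    push_neg at hc
    apply hh₀
    have : h₀ = Finset.univ.sup' Finset.univ_nonempty (fun x => δ x (h₀ x)) := by
      funext y
      rw [Finset.sup'_apply]
      apply le_antisymm
      · exact Finset.le_sup' (fun x => δ x (h₀ x) y) (Finset.mem_univ y) |>.trans_eq' (by simp [hδ])
      · apply Finset.sup'_le
        intro z _
        simp only [hδ]
        split
        · next h => exact le_of_eq (by rw [h])
        · exact Fin.mk_le_mk.2 (Nat.zero_le _)
    rw [this]
    exact Finset.sup'_mem (↑τ : Set (Fin n → Fin m)) hsup _ _ _ (fun i _ => hc i (h₀ i))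
  -- the minimal open set with value ≥ a at x
  set τ' : Finset (Fin n → Fin m) := τ.filter (fun f => a ≤ f x) with hτ'
  have htopmem : (fun _ => (⟨m - 1, by omega⟩ : Fin m)) ∈ τ' := by
    rw [hτ', Finset.mem_filter]
    exact ⟨htop, Fin.mk_le_mk.2 (by omega)⟩
  have hτ'ne : τ'.Nonempty := ⟨_, htopmem⟩
  set u : Fin n → Fin m := τ'.inf' hτ'ne id with hu
  have humem : u ∈ τ := by
    have := Finset.inf'_mem (↑τ : Set (Fin n → Fin m)) hinf τ' hτ'ne id
      (fun f hf => (Finset.mem_filter.1 hf).1)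
    exact this
  have hux : a ≤ u x := by
    rw [hu, Finset.inf'_apply]
    exact Finset.le_inf' _ _ (fun f hf => (Finset.mem_filter.1 hf).2)
  have hule : ∀ f ∈ τ', u ≤ f := fun f hf => Finset.inf'_le id hf
  -- u ≠ δ x a
  have hune : u ≠ δ x a := fun h => hxa (h ▸ humem)
  -- get forbidden coordinates
  obtain ⟨y, hyx, b, c, P⟩ : ∃ y, y ≠ x ∧ ∃ b c : Fin m,
      ∀ h ∈ τ, ¬(h x = b ∧ h y = c) := by
    by_cases hcase : ∃ y, y ≠ x ∧ u y ≠ ⟨0, Nat.pos_of_ne_zero hm⟩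
    · obtain ⟨y, hyx, huy⟩ := hcase
      refine ⟨y, hyx, ⟨m - 1, by omega⟩, ⟨0, Nat.pos_of_ne_zero hm⟩, ?_⟩
      rintro h hmem ⟨hx, hy⟩
      have hmem' : h ∈ τ' := Finset.mem_filter.2 ⟨hmem, by rw [hx]; exact Fin.mk_le_mk.2 (by omega)⟩
      have : u y ≤ h y := hule h hmem' y
      rw [hy] at this
      exact huy (le_antisymm this (Fin.mk_le_mk.2 (Nat.zero_le _)))
    · push_neg at hcase
      -- then u x > a
      have hax : a < u x := by
        rcases lt_or_eq_of_le hux with h | h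
        · exact h
        · exfalso; apply hune
          funext z
          by_cases hz : z = x
          · subst hz; simp [hδ, h.symm]
          · simp [hδ, hz, hcase z hz]
      obtain ⟨y, hyx⟩ := Fintype.exists_ne_of_one_lt_card (by simp; omega) x
      refine ⟨y, hyx, a, ⟨0, Nat.pos_of_ne_zero hm⟩, ?_⟩
      rintro h hmem ⟨hx, -⟩
      have hmem' : h ∈ τ' := Finset.mem_filter.2 ⟨hmem, by rw [hx]⟩
      have : u x ≤ h x := hule h hmem' x
      rw [hx] at this
      exact absurd this (not_le.2 hax)
  exact card_le_of_forbidden hm τ hyx b c P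

theorem tauF_gap (n m k : ℕ) (hm : 2 ≤ m) (hnm : m ≤ n)
    (h₁ : m ^ n - m ^ (n - 2) < k) (h₂ : k < m ^ n) :
    tauF n m k (by omega) = 0 := by
  have hm0 : m ≠ 0 := by omega
  haveI : IsEmpty {τ : Finset (Fin n → Fin m) //
      IsFuzzyTopology (show m ≠ 0 by omega) τ ∧ τ.card = k} := by
    constructor
    rintro ⟨τ, hτ, hk⟩
    have hbound := main_bound (by omega) (by omega) τ hτ (by omega)
    have hpow : m ^ (n - 2) ≤ m ^ n := Nat.pow_le_pow_right (by omega) (by omega)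
    omega
  rw [tauF]
  exact Nat.card_of_isEmpty
end

section
/- Let X be a nonempty set and let M be a complete linear order with at least two elements. The collection of all fuzzy topologies on X with membership values in M is finite if and only if both X and M are finite. -/
/-- A fuzzy topology on a set `X` with membership values in a complete linear order `M`:
a collection of fuzzy sets (functions `X → M`) containing the constant function with value `⊥`
and the constant function with value `⊤`, closed under pointwise suprema of arbitrary
subfamilies, and closed under pointwise infima of pairs. -/
def IsFuzzyTopologyC {X M : Type*} [CompleteLinearOrder M] (τ : Set (X → M)) : Prop :=
  (fun _ => (⊥ : M)) ∈ τ ∧ (fun _ => (⊤ : M)) ∈ τ ∧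
  (∀ S : Set (X → M), S ⊆ τ → sSup S ∈ τ) ∧
  (∀ f ∈ τ, ∀ g ∈ τ, f ⊓ g ∈ τ)

lemma tri_isFuzzyTopologyC {X M : Type*} [CompleteLinearOrder M] (g : X → M) :
    IsFuzzyTopologyC ({(fun _ => (⊥ : M)), (fun _ => (⊤ : M)), g} : Set (X → M)) := by
  have hbot : (fun _ => (⊥ : M)) = (⊥ : X → M) := rfl
  have htop : (fun _ => (⊤ : M)) = (⊤ : X → M) := rfl
  refine ⟨by simp, by simp, ?_, ?_⟩
  · intro S hS
    by_cases h1 : (fun _ => (⊤ : M)) ∈ S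
    · have : sSup S = (fun _ => (⊤ : M)) := by
        refine le_antisymm ?_ (le_sSup h1)
        rw [htop]; exact le_top
      rw [this]; simp
    · by_cases h2 : g ∈ S
      · have : sSup S = g := by
          refine le_antisymm (sSup_le ?_) (le_sSup h2)
          intro f hf
          rcases hS hf with rfl | rfl | rfl
          · rw [hbot]; exact bot_le
          · exact absurd hf h1
          · exact le_rfl
        rw [this]; simp
      · have : sSup S = (fun _ => (⊥ : M)) := by
          refine le_antisymm (sSup_le ?_) (by rw [hbot]; exact bot_le)
          intro f hf
          rcases hS hf with rfl | rfl | rfl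
          · exact le_rfl
          · exact absurd hf h1
          · exact absurd hf h2
        rw [this]; simp
  · intro f hf g' hg'
    have hb : ∀ h : X → M, (fun _ => (⊥ : M)) ⊓ h = (fun _ => (⊥ : M)) := by
      intro h; funext x; simp
    have hb' : ∀ h : X → M, h ⊓ (fun _ => (⊥ : M)) = (fun _ => (⊥ : M)) := by
      intro h; funext x; simp
    have ht : ∀ h : X → M, (fun _ => (⊤ : M)) ⊓ h = h := by
      intro h; funext x; simp
    have ht' : ∀ h : X → M, h ⊓ (fun _ => (⊤ : M)) = h := by
      intro h; funext x; simp
    rcases hf with rfl | rfl | rfl <;> rcases hg' with rfl | rfl | rfl <;>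
      simp [hb, hb', ht, ht', inf_idem]

theorem finitely_many_fuzzy_topologies_iff {X M : Type*} [Nonempty X]
    [CompleteLinearOrder M] [Nontrivial M] :
    {τ : Set (X → M) | IsFuzzyTopologyC τ}.Finite ↔ (Finite X ∧ Finite M) := by
  classical
  constructor
  · intro hfin
    have hsub := hfin.to_subtype
    obtain ⟨x₀⟩ := ‹Nonempty X›
    have hbt : (⊥ : M) ≠ ⊤ := bot_ne_top
    constructor
    · -- X finite via indicator functions
      set f : X → X → M := fun x y => if y = x then ⊤ else ⊥ with hf
      have hFx : ∀ x, f x x = ⊤ := by intro x; simp [hf]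
      have hFxy : ∀ x y, y ≠ x → f x y = ⊥ := by intro x y h; simp [hf, h]
      let F : X → {τ : Set (X → M) | IsFuzzyTopologyC τ} :=
        fun x => ⟨{(fun _ => (⊥ : M)), (fun _ => (⊤ : M)), f x}, tri_isFuzzyTopologyC _⟩
      have hinj : Function.Injective F := by
        intro x x' h
        by_contra hne
        have hmem : f x ∈ ({(fun _ => (⊥ : M)), (fun _ => (⊤ : M)), f x'} :
            Set (X → M)) := by
          have := congrArg Subtype.val h
          simp only [F] at this
          rw [← this]; simp
        rcases hmem with h' | h' | h'
        · have := congrFun h' x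
          rw [hFx] at this
          exact hbt this.symm
        · have := congrFun h' x'
          rw [hFxy x x' (fun hc => hne hc.symm)] at this
          exact hbt this
        · have := congrFun h' x
          rw [hFx, hFxy x' x hne] at this
          exact hbt this.symm
      exact Finite.of_injective F hinj
    · -- M finite via constant functions
      let S : Set M := {m | m ≠ ⊥ ∧ m ≠ ⊤}
      let G : S → {τ : Set (X → M) | IsFuzzyTopologyC τ} :=
        fun m => ⟨{(fun _ => (⊥ : M)), (fun _ => (⊤ : M)), fun _ => (m : M)},
          tri_isFuzzyTopologyC _⟩
      have hinj : Function.Injective G := by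
        intro m m' h
        have hmem : (fun _ : X => (m : M)) ∈
            ({(fun _ => (⊥ : M)), (fun _ => (⊤ : M)), fun _ => (m' : M)} :
            Set (X → M)) := by
          have := congrArg Subtype.val h
          simp only [G] at this
          rw [← this]; simp
        rcases hmem with h' | h' | h'
        · exact absurd (congrFun h' x₀) m.2.1
        · exact absurd (congrFun h' x₀) m.2.2
        · exact Subtype.ext (congrFun h' x₀)
      have : Finite S := Finite.of_injective G hinj
      have hSfin : S.Finite := Set.finite_coe_iff.mp this
      have huniv : (Set.univ : Set M) ⊆ S ∪ {⊥, ⊤} := by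
        intro m _
        by_cases h1 : m = ⊥
        · right; simp [h1]
        · by_cases h2 : m = ⊤
          · right; simp [h2]
          · left; exact ⟨h1, h2⟩
      have : (Set.univ : Set M).Finite :=
        Set.Finite.subset (hSfin.union ((Set.finite_singleton (⊤:M)).insert ⊥)) huniv
      exact Set.finite_univ_iff.mp this
  · rintro ⟨hX, hM⟩
    exact Set.toFinite _
end
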